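/- Let J ⊆ I and let P : V → V be the orthogonal projection onto the orthogonal complement of the span of {α_j : j ∈ J}. Then P preserves the dominance order: if μ ≼ ν then P(μ) ≼ P(ν). Equivalently, for every i ∈ I, P(α_i) is a linear combination of the α_k (k ∈ I) with nonnegative coefficients. -/

import Mathlib

open RealInnerProductSpace

lemma key_lemma {V : Type*} [NormedAddCommGroup V] [InnerProductSpace ℝ V]
    {ι : Type*} [Fintype ι] (α : Module.Basis ι ℝ V)
    (hα : ∀ i j, i ≠ j → ⟪α i, α j⟫ ≤ 0) (J : Set ι) (d : ι → ℝ)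
    (hd : ∀ j, j ∉ J → d j = 0)
    (hq : ∀ j ∈ J, ⟪α j, (∑ k, d k • α k)⟫ ≤ 0) : ∀ j, d j ≤ 0 := by
  set q : V := ∑ k, d k • α k with hqdef
  set dp : ι → ℝ := fun j => max (d j) 0 with hdp
  set dm : ι → ℝ := fun j => max (-(d j)) 0 with hdm
  set qp : V := ∑ k, dp k • α k with hqp
  set qm : V := ∑ k, dm k • α k with hqm
  have hqpq : qp = q + qm := by
    rw [hqp, hqdef, hqm, ← Finset.sum_add_distrib]
    refine Finset.sum_congr rfl fun k _ => ?_
    rw [← add_smul]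
    congr 1
    rcases le_total (d k) 0 with h | h
    · rw [hdp, hdm]; simp only []
      rw [max_eq_right h, max_eq_left (neg_nonneg.2 h)]; ring
    · rw [hdp, hdm]; simp only []
      rw [max_eq_left h, max_eq_right (neg_nonpos.2 h)]; ring
  have h1 : ⟪qp, q⟫ ≤ 0 := by
    rw [hqp, sum_inner]
    apply Finset.sum_nonpos
    intro j _
    rw [real_inner_smul_left]
    rcases le_or_gt (d j) 0 with h | h
    · have : dp j = 0 := by rw [hdp]; simp [max_eq_right h]
      simp [this]
    · have hjJ : j ∈ J := by
        by_contra hjJ; exact absurd (hd j hjJ) (by linarith)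
      exact mul_nonpos_of_nonneg_of_nonpos (le_max_right _ _) (hq j hjJ)
  have h2 : ⟪qp, qm⟫ ≤ 0 := by
    rw [hqp, hqm, sum_inner]
    apply Finset.sum_nonpos
    intro j _
    rw [real_inner_smul_left, inner_sum, Finset.mul_sum]
    apply Finset.sum_nonpos
    intro k _
    rw [real_inner_smul_right, ← mul_assoc]
    rcases eq_or_ne j k with rfl | hjk
    · have h0 : dp j * dm j = 0 := by
        rcases le_total (d j) 0 with h | h
        · rw [hdp]; simp [max_eq_right h]
        · rw [hdm]; simp [max_eq_right (neg_nonpos.2 h)]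
      rw [h0, zero_mul]
    · exact mul_nonpos_of_nonneg_of_nonpos
        (mul_nonneg (le_max_right _ _) (le_max_right _ _)) (hα j k hjk)
  have hqp0 : qp = 0 := by
    rw [← real_inner_self_nonpos]
    calc ⟪qp, qp⟫ = ⟪qp, q⟫ + ⟪qp, qm⟫ := by rw [hqpq, inner_add_right]
    _ ≤ 0 := by linarith
  have hdp0 : ∀ j, dp j = 0 :=
    Fintype.linearIndependent_iff.1 α.linearIndependent dp (by rw [← hqp, hqp0])
  intro j
  have h := hdp0 j
  rw [hdp] at h
  simp only [] at h
  exact max_eq_right_iff.1 h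

lemma proj_basis_nonneg {V : Type*} [NormedAddCommGroup V] [InnerProductSpace ℝ V]
    [FiniteDimensional ℝ V] {ι : Type*} [Fintype ι] (α : Module.Basis ι ℝ V)
    (hα : ∀ i j, i ≠ j → ⟪α i, α j⟫ ≤ 0) (J : Set ι) (i : ι) :
    ∃ c : ι → ℝ, (∀ j, 0 ≤ c j) ∧
      (Submodule.orthogonalProjectionOnto (Submodule.span ℝ (α '' J))ᗮ (α i) : V) = ∑ j, c j • α j := by
  classical
  set K := Submodule.span ℝ (α '' J) with hK
  by_cases hi : i ∈ J
  · refine ⟨0, fun j => le_refl 0, ?_⟩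
    have hmem : α i ∈ Kᗮᗮ :=
      K.le_orthogonal_orthogonal (Submodule.subset_span ⟨i, hi, rfl⟩)
    rw [Submodule.orthogonalProjectionOnto_apply_of_mem_orthogonal hmem]
    simp
  · set q : V := (Submodule.orthogonalProjectionOnto K (α i) : V) with hq
    have hqK : q ∈ K := Submodule.coe_mem _
    set d : ι → ℝ := fun j => α.repr q j with hdd
    have hdsupp : ∀ j, j ∉ J → d j = 0 := by
      intro j hj
      have hsupp : ↑(α.repr q).support ⊆ J := (α.mem_span_image).1 hqK
      by_contra h
      exact hj (hsupp (Finsupp.mem_support_iff.2 h))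
    have hqsum : q = ∑ k, d k • α k := by
      have h := α.sum_repr q
      exact h.symm
    have horth : ∀ j ∈ J, ⟪α j, (∑ k, d k • α k)⟫ ≤ 0 := by
      intro j hj
      rw [← hqsum]
      have hperp : α i - q ∈ Kᗮ := K.sub_starProjection_mem_orthogonal (α i)
      have hz : ⟪α j, α i - q⟫ = 0 :=
        (Submodule.mem_orthogonal K _).1 hperp (α j) (Submodule.subset_span ⟨j, hj, rfl⟩)
      have : ⟪α j, q⟫ = ⟪α j, α i⟫ := by
        rw [inner_sub_right] at hz; linarith
      rw [this]
      exact hα j i (fun h => hi (h ▸ hj))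
    have hdle : ∀ j, d j ≤ 0 := key_lemma α hα J d hdsupp horth
    refine ⟨fun j => (if j = i then 1 else 0) - d j, fun j => ?_, ?_⟩
    · dsimp only
      rcases eq_or_ne j i with rfl | h
      · have h0 := hdsupp j hi
        rw [if_pos rfl]
        linarith
      · rw [if_neg h]
        linarith [hdle j]
    · have hP : (Submodule.orthogonalProjectionOnto Kᗮ (α i) : V) = α i - q := by
        have : (Submodule.orthogonalProjectionOnto K (α i) : V) + (Submodule.orthogonalProjectionOnto Kᗮ (α i) : V) = α i :=
          K.starProjection_add_starProjection_orthogonal (α i)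
        rw [← hq] at this
        rw [eq_sub_iff_add_eq, add_comm]
        exact this
      have hsplit : ∑ j, ((if j = i then (1:ℝ) else 0) - d j) • α j
           = (∑ j, (if j = i then (1:ℝ) else 0) • α j) - ∑ j, d j • α j := by
        rw [← Finset.sum_sub_distrib]
        exact Finset.sum_congr rfl fun j _ => sub_smul _ _ _
      rw [hP, hsplit, ← hqsum]
      congr 1
      simp [ite_smul]

theorem stmt_7 {V : Type*} [NormedAddCommGroup V] [InnerProductSpace ℝ V]
    [FiniteDimensional ℝ V] {ι : Type*} [Fintype ι] (α : Module.Basis ι ℝ V)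
    (hα : ∀ i j, i ≠ j → ⟪α i, α j⟫ ≤ 0) (J : Set ι) :
    (∀ μ ν : V,
      (∃ c : ι → ℝ, (∀ i, 0 ≤ c i) ∧ ν - μ = ∑ i, c i • α i) →
      ∃ c : ι → ℝ, (∀ i, 0 ≤ c i) ∧
        ((Submodule.orthogonalProjectionOnto (Submodule.span ℝ (α '' J))ᗮ ν : V) -
          (Submodule.orthogonalProjectionOnto (Submodule.span ℝ (α '' J))ᗮ μ : V)) = ∑ i, c i • α i) ∧
    ∀ i : ι, ∃ c : ι → ℝ, (∀ j, 0 ≤ c j) ∧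
      (Submodule.orthogonalProjectionOnto (Submodule.span ℝ (α '' J))ᗮ (α i) : V) = ∑ j, c j • α j := by
  refine ⟨?_, proj_basis_nonneg α hα J⟩
  intro μ ν ⟨c, hc, hsub⟩
  choose d hd0 hdeq using proj_basis_nonneg α hα J
  set K := Submodule.span ℝ (α '' J) with hK
  set f : V →ₗ[ℝ] V := Kᗮ.subtype ∘ₗ (Submodule.orthogonalProjectionOnto Kᗮ).toLinearMap with hf
  have hfval : ∀ v : V, f v = (Submodule.orthogonalProjectionOnto Kᗮ v : V) := fun v => rfl
  refine ⟨fun j => ∑ i, c i * d i j, fun j => Finset.sum_nonneg fun i _ =>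
    mul_nonneg (hc i) (hd0 i j), ?_⟩
  have : (Submodule.orthogonalProjectionOnto Kᗮ ν : V) - (Submodule.orthogonalProjectionOnto Kᗮ μ : V) = f (ν - μ) := by
    rw [map_sub, hfval, hfval]
  rw [this, hsub, map_sum]
  calc ∑ i, f (c i • α i) = ∑ i, c i • (Submodule.orthogonalProjectionOnto Kᗮ (α i) : V) := by
        refine Finset.sum_congr rfl fun i _ => ?_
        rw [map_smul, hfval]
    _ = ∑ i, ∑ j, (c i * d i j) • α j := by
        refine Finset.sum_congr rfl fun i _ => ?_
        rw [hdeq i, Finset.smul_sum]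
        exact Finset.sum_congr rfl fun j _ => (smul_smul (c i) (d i j) (α j))
    _ = ∑ j, (∑ i, c i * d i j) • α j := by
        rw [Finset.sum_comm]
        exact Finset.sum_congr rfl fun j _ => (Finset.sum_smul).symm
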